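/- Let E be a metric space. A sequence {f_n} in C_b(E) is norm-bounded and converges to f uniformly on every compact subset of E if and only if {f_n} is bounded and converges to f in the topology τ_K generated by the seminorms p_{K,μ}(g) = sup_{x∈K}|g(x)| + |∫_E g dμ| (K ⊆ E compact nonempty, μ ∈ ca(E)). -/

import Mathlib

open Filter Topology MeasureTheory BoundedContinuousFunction
open scoped NNReal ENNReal

/-- Integration of a function against a finite countably additive signed Borel measure,
via its Jordan decomposition. -/
noncomputable def intSM' {E : Type*} [MeasurableSpace E]
    (s : SignedMeasure E) (f : E → ℝ) : ℝ :=
  (∫ x, f x ∂s.toJordanDecomposition.posPart) -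
    ∫ x, f x ∂s.toJordanDecomposition.negPart

/-- The locally convex topology τ_K on C_b(E), generated by the seminorms
p_{K,μ}(f) = sup_{x∈K}|f(x)| + |∫ f dμ| over nonempty compact K and μ ∈ ca(E). -/
noncomputable def tauK (E : Type*) [MetricSpace E] [MeasurableSpace E] [BorelSpace E] :
    TopologicalSpace (BoundedContinuousFunction E ℝ) :=
  (⨅ (K : Set E) (_ : IsCompact K) (_ : K.Nonempty),
      TopologicalSpace.induced
        (fun f : BoundedContinuousFunction E ℝ => UniformFun.ofFun fun x : K => f x)
        inferInstance) ⊓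
    ⨅ s : SignedMeasure E,
      TopologicalSpace.induced (fun f : BoundedContinuousFunction E ℝ => intSM' s ⇑f)
        inferInstance

section Aux
set_option linter.unusedSectionVars false
variable {E : Type*} [MetricSpace E] [MeasurableSpace E] [BorelSpace E]

lemma intSM'_add (s : SignedMeasure E) (f g : BoundedContinuousFunction E ℝ) :
    intSM' s ⇑(f + g) = intSM' s ⇑f + intSM' s ⇑g := by
  simp only [intSM', BoundedContinuousFunction.coe_add, Pi.add_apply]
  rw [integral_add (f.integrable _) (g.integrable _),
    integral_add (f.integrable _) (g.integrable _)]
  ring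

lemma intSM'_smul (s : SignedMeasure E) (c : ℝ) (f : BoundedContinuousFunction E ℝ) :
    intSM' s ⇑(c • f) = c * intSM' s ⇑f := by
  simp only [intSM', BoundedContinuousFunction.coe_smul, Pi.smul_apply, smul_eq_mul]
  rw [integral_const_mul, integral_const_mul]
  ring

/-- `intSM' s` as a linear map on bounded continuous functions. -/
noncomputable def intSMlm (s : SignedMeasure E) :
    BoundedContinuousFunction E ℝ →ₗ[ℝ] ℝ where
  toFun f := intSM' s ⇑f
  map_add' := intSM'_add s
  map_smul' := intSM'_smul s

lemma intSM'_bound (s : SignedMeasure E) (f : BoundedContinuousFunction E ℝ) :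
    |intSM' s ⇑f| ≤ ((s.toJordanDecomposition.posPart Set.univ).toReal +
      (s.toJordanDecomposition.negPart Set.univ).toReal) * ‖f‖ := by
  have h1 := f.norm_integral_le_mul_norm (μ := s.toJordanDecomposition.posPart)
  have h2 := f.norm_integral_le_mul_norm (μ := s.toJordanDecomposition.negPart)
  rw [intSM']
  calc |(∫ x, f x ∂s.toJordanDecomposition.posPart) -
      ∫ x, f x ∂s.toJordanDecomposition.negPart| ≤
      ‖∫ x, f x ∂s.toJordanDecomposition.posPart‖ +
        ‖∫ x, f x ∂s.toJordanDecomposition.negPart‖ := abs_sub _ _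
    _ ≤ _ := by rw [add_mul]; exact add_le_add h1 h2

/-- Jordan-decomposition integral of a difference of finite measures. -/
lemma intSM'_toSignedMeasure_sub (μ ν : Measure E) [IsFiniteMeasure μ] [IsFiniteMeasure ν]
    (f : BoundedContinuousFunction E ℝ) :
    intSM' (μ.toSignedMeasure - ν.toSignedMeasure) ⇑f =
      (∫ x, f x ∂μ) - ∫ x, f x ∂ν := by
  set s : SignedMeasure E := μ.toSignedMeasure - ν.toSignedMeasure with hs
  have h := s.toSignedMeasure_toJordanDecomposition
  rw [JordanDecomposition.toSignedMeasure] at h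
  have key : s.toJordanDecomposition.posPart + ν = μ + s.toJordanDecomposition.negPart := by
    rw [← Measure.toSignedMeasure_eq_toSignedMeasure_iff,
      Measure.toSignedMeasure_add, Measure.toSignedMeasure_add]
    rw [hs] at h
    linear_combination (norm := abel1) h
  have := congrArg (fun m => ∫ x, f x ∂m) key
  simp only [integral_add_measure (f.integrable _) (f.integrable _)] at this
  rw [intSM']
  linarith

/-- Restriction to a subset, as a linear map into bounded continuous functions. -/
noncomputable def restrLM (K : Set E) :
    BoundedContinuousFunction E ℝ →ₗ[ℝ] BoundedContinuousFunction K ℝ where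
  toFun f := f.compContinuous ⟨Subtype.val, continuous_subtype_val⟩
  map_add' f g := by ext x; simp
  map_smul' c f := by ext x; simp

lemma restrLM_apply (K : Set E) (f : BoundedContinuousFunction E ℝ) (x : K) :
    restrLM K f x = f x := rfl

lemma norm_restrLM_le (K : Set E) (f : BoundedContinuousFunction E ℝ) :
    ‖restrLM K f‖ ≤ ‖f‖ := by
  apply BoundedContinuousFunction.norm_le (norm_nonneg f) |>.2
  intro x
  exact f.norm_coe_le_norm x

/-- The two filters describing "uniform smallness on K" coincide. -/
lemma comap_uniformFun_eq_comap_norm (K : Set E) :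
    Filter.comap (fun f : BoundedContinuousFunction E ℝ =>
        UniformFun.ofFun fun x : K => f x) (𝓝 (UniformFun.ofFun fun x : K => (0 : ℝ))) =
      Filter.comap (fun f : BoundedContinuousFunction E ℝ => ‖restrLM K f‖) (𝓝 0) := by
  have hb := UniformFun.hasBasis_nhds_of_basis K ℝ
    (UniformFun.ofFun fun _ : K => (0 : ℝ)) Metric.uniformity_basis_dist
  apply le_antisymm
  · rw [(hb.comap _).le_basis_iff (Metric.nhds_basis_ball.comap _)]
    intro ε hε
    refine ⟨ε / 2, half_pos hε, ?_⟩
    intro f hf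
    simp only [Set.mem_preimage, Metric.mem_ball, Real.dist_eq, sub_zero] at hf ⊢
    have hle : ‖restrLM K f‖ ≤ ε / 2 := by
      apply BoundedContinuousFunction.norm_le (le_of_lt (half_pos hε)) |>.2
      intro x
      have h := hf x
      simp only [Set.mem_setOf_eq, UniformFun.toFun_ofFun, Real.dist_eq] at h
      rw [restrLM_apply]
      simpa [abs_sub_comm] using h.le
    rw [abs_of_nonneg (norm_nonneg _)]
    exact lt_of_le_of_lt hle (half_lt_self hε)
  · rw [(Metric.nhds_basis_ball.comap _).le_basis_iff (hb.comap _)]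
    intro ε hε
    refine ⟨ε, hε, ?_⟩
    intro f hf
    simp only [Set.mem_preimage, Metric.mem_ball, Real.dist_eq, sub_zero] at hf
    simp only [Set.mem_preimage, UniformFun.gen, Set.mem_setOf_eq]
    intro x
    have h1 : |(restrLM K f) x| ≤ ‖restrLM K f‖ := (restrLM K f).norm_coe_le_norm x
    rw [restrLM_apply] at h1
    calc dist ((UniformFun.ofFun fun _ : K => (0:ℝ)) x)
          ((UniformFun.ofFun fun y : K => f y) x) = |f x| := by
          show |(0:ℝ) - f x| = |f x|
          rw [zero_sub, abs_neg]
      _ ≤ ‖restrLM K f‖ := h1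
      _ < ε := lt_of_abs_lt hf

/-- Index type for the seminorm family generating `tauK`. -/
abbrev tauKIdx (E : Type*) [MetricSpace E] [MeasurableSpace E] : Type _ :=
  {K : Set E // IsCompact K ∧ K.Nonempty} ⊕ SignedMeasure E

instance : Nonempty (tauKIdx E) := ⟨Sum.inr 0⟩

/-- The seminorm family generating `tauK`. -/
noncomputable def pFam (E : Type*) [MetricSpace E] [MeasurableSpace E] [BorelSpace E] :
    SeminormFamily ℝ (BoundedContinuousFunction E ℝ) (tauKIdx E) := fun i =>
  match i with
  | Sum.inl K => (normSeminorm ℝ (BoundedContinuousFunction K.1 ℝ)).comp (restrLM K.1)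
  | Sum.inr s => (normSeminorm ℝ ℝ).comp (intSMlm s)

lemma pFam_inl (K : {K : Set E // IsCompact K ∧ K.Nonempty})
    (f : BoundedContinuousFunction E ℝ) : pFam E (Sum.inl K) f = ‖restrLM K.1 f‖ := rfl

lemma pFam_inr (s : SignedMeasure E) (f : BoundedContinuousFunction E ℝ) :
    pFam E (Sum.inr s) f = |intSM' s ⇑f| := rfl

/-- `tauK` makes `C_b(E)` a topological additive group. -/
lemma tauK_topologicalAddGroup :
    @IsTopologicalAddGroup (BoundedContinuousFunction E ℝ) (tauK E) _ := by
  show @IsTopologicalAddGroup (BoundedContinuousFunction E ℝ)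
    ((⨅ (K : Set E) (_ : IsCompact K) (_ : K.Nonempty),
      TopologicalSpace.induced
        (fun f : BoundedContinuousFunction E ℝ => UniformFun.ofFun fun x : K => f x)
        inferInstance) ⊓
    ⨅ s : SignedMeasure E,
      TopologicalSpace.induced (fun f : BoundedContinuousFunction E ℝ => intSM' s ⇑f)
        inferInstance) _
  have h1 : @IsTopologicalAddGroup (BoundedContinuousFunction E ℝ)
      (⨅ (K : Set E) (_ : IsCompact K) (_ : K.Nonempty),
        TopologicalSpace.induced
          (fun f : BoundedContinuousFunction E ℝ => UniformFun.ofFun fun x : K => f x)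
          inferInstance) _ := by
    refine topologicalAddGroup_iInf fun K => topologicalAddGroup_iInf fun _ =>
      topologicalAddGroup_iInf fun _ => ?_
    exact topologicalAddGroup_induced
      ({ toFun := (fun f : BoundedContinuousFunction E ℝ => UniformFun.ofFun fun x : K => f x)
         map_zero' := rfl
         map_add' := fun f g => rfl } :
        BoundedContinuousFunction E ℝ →+ UniformFun (↥K) ℝ)
  have h2 : @IsTopologicalAddGroup (BoundedContinuousFunction E ℝ)
      (⨅ s : SignedMeasure E,
        TopologicalSpace.induced (fun f : BoundedContinuousFunction E ℝ => intSM' s ⇑f)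
          inferInstance) _ := by
    refine topologicalAddGroup_iInf fun s => ?_
    exact topologicalAddGroup_induced (intSMlm s).toAddMonoidHom
  exact topologicalAddGroup_inf h1 h2

lemma nhds_tauK (g : BoundedContinuousFunction E ℝ) :
    @nhds _ (tauK E) g =
      (⨅ (K : Set E) (_ : IsCompact K) (_ : K.Nonempty),
        Filter.comap (fun f : BoundedContinuousFunction E ℝ =>
          UniformFun.ofFun fun x : K => f x) (𝓝 (UniformFun.ofFun fun x : K => g x))) ⊓
      ⨅ s : SignedMeasure E,
        Filter.comap (fun f : BoundedContinuousFunction E ℝ => intSM' s ⇑f)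
          (𝓝 (intSM' s ⇑g)) := by
  set tA : TopologicalSpace (BoundedContinuousFunction E ℝ) :=
    ⨅ (K : Set E) (_ : IsCompact K) (_ : K.Nonempty),
      TopologicalSpace.induced
        (fun f : BoundedContinuousFunction E ℝ => UniformFun.ofFun fun x : K => f x)
        inferInstance with htA
  set tB : TopologicalSpace (BoundedContinuousFunction E ℝ) :=
    ⨅ s : SignedMeasure E,
      TopologicalSpace.induced (fun f : BoundedContinuousFunction E ℝ => intSM' s ⇑f)
        inferInstance with htB
  have ht : tauK E = tA ⊓ tB := rfl
  rw [ht, @nhds_inf _ tA tB g, htA, htB]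
  congr 1
  · rw [_root_.nhds_iInf]
    refine iInf_congr fun K => ?_
    rw [_root_.nhds_iInf]
    refine iInf_congr fun _ => ?_
    rw [_root_.nhds_iInf]
    refine iInf_congr fun _ => ?_
    rw [nhds_induced]
  · rw [_root_.nhds_iInf]
    refine iInf_congr fun s => ?_
    rw [nhds_induced]

lemma withSeminorms_tauK :
    @WithSeminorms ℝ (BoundedContinuousFunction E ℝ) (tauKIdx E) _ _ _ (pFam E) (tauK E) := by
  letI := tauK E
  haveI : IsTopologicalAddGroup (BoundedContinuousFunction E ℝ) := tauK_topologicalAddGroup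
  rw [SeminormFamily.withSeminorms_iff_nhds_eq_iInf]
  rw [iInf_sum]
  rw [nhds_tauK (0 : BoundedContinuousFunction E ℝ)]
  congr 1
  · calc (⨅ (K : Set E) (_ : IsCompact K) (_ : K.Nonempty),
        Filter.comap (fun f : BoundedContinuousFunction E ℝ =>
          UniformFun.ofFun fun x : K => f x)
          (𝓝 (UniformFun.ofFun fun x : K => (0 : BoundedContinuousFunction E ℝ) x)))
        = ⨅ (K : Set E), ⨅ (_ : IsCompact K ∧ K.Nonempty),
          Filter.comap (fun f : BoundedContinuousFunction E ℝ =>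
            UniformFun.ofFun fun x : K => f x)
            (𝓝 (UniformFun.ofFun fun x : K => (0 : BoundedContinuousFunction E ℝ) x)) :=
          iInf_congr fun K =>
            (iInf_and (p := IsCompact K) (q := K.Nonempty)
              (s := fun _ => Filter.comap (fun f : BoundedContinuousFunction E ℝ =>
                UniformFun.ofFun fun x : K => f x)
                (𝓝 (UniformFun.ofFun fun x : K =>
                  (0 : BoundedContinuousFunction E ℝ) x)))).symm
      _ = ⨅ (K : {K : Set E // IsCompact K ∧ K.Nonempty}),
          Filter.comap (fun f : BoundedContinuousFunction E ℝ =>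
            UniformFun.ofFun fun x : K.1 => f x)
            (𝓝 (UniformFun.ofFun fun x : K.1 =>
              (0 : BoundedContinuousFunction E ℝ) x)) := iInf_subtype'
      _ = ⨅ (K : {K : Set E // IsCompact K ∧ K.Nonempty}),
          Filter.comap (⇑(pFam E (Sum.inl K))) (𝓝 0) := by
            refine iInf_congr fun K => ?_
            have h0 : (fun x : K.1 => ((0 : BoundedContinuousFunction E ℝ) : E → ℝ) x) =
              (fun _ : K.1 => (0:ℝ)) := rfl
            rw [h0, comap_uniformFun_eq_comap_norm]
            rfl
  · refine iInf_congr fun s => ?_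
    have h0 : intSM' s ⇑(0 : BoundedContinuousFunction E ℝ) = 0 := by
      simp [intSM']
    rw [h0]
    have : ⇑(pFam E (Sum.inr s)) =
        (fun r : ℝ => ‖r‖) ∘ (fun f : BoundedContinuousFunction E ℝ => intSM' s ⇑f) := rfl
    rw [this, ← Filter.comap_comap, comap_norm_nhds_zero]
end Aux

section UBP
set_option linter.unusedSectionVars false
variable {E : Type*} [MetricSpace E] [MeasurableSpace E] [BorelSpace E]

lemma lp_summable_norm (a : lp (fun _ : ℕ => ℝ) 1) : Summable fun k => ‖a k‖ := by
  simpa [Real.rpow_one] using (lp.memℓp a).summable (p := 1) (by norm_num)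

lemma lp_norm_eq (a : lp (fun _ : ℕ => ℝ) 1) : ‖a‖ = ∑' k, ‖a k‖ := by
  have := (lp.hasSum_norm (p := 1) (by norm_num) a).tsum_eq
  simpa [Real.rpow_one] using this.symm

lemma summable_toNNReal {r : ℕ → ℝ} (h : Summable fun k => ‖r k‖) :
    Summable fun k => (r k).toNNReal := by
  rw [← NNReal.summable_coe]
  refine Summable.of_nonneg_of_le (fun k => NNReal.coe_nonneg _) (fun k => ?_) h
  rw [Real.coe_toNNReal']
  exact max_le (le_abs_self _) (abs_nonneg _)

/-- Finite measure built from a summable family of point masses. -/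
noncomputable def diracMix (x : ℕ → E) (c : ℕ → ℝ≥0) : Measure E :=
  Measure.sum fun k => (c k : ℝ≥0∞) • Measure.dirac (x k)

lemma diracMix_isFiniteMeasure (x : ℕ → E) (c : ℕ → ℝ≥0) (hc : Summable c) :
    IsFiniteMeasure (diracMix x c) := by
  constructor
  rw [diracMix, Measure.sum_apply _ MeasurableSet.univ]
  simp only [Measure.smul_apply, Measure.dirac_apply_of_mem (Set.mem_univ _), smul_eq_mul,
    mul_one]
  exact lt_top_iff_ne_top.2 (ENNReal.tsum_coe_ne_top_iff_summable.2 hc)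

lemma integral_diracMix (x : ℕ → E) (c : ℕ → ℝ≥0) (hc : Summable c)
    (f : BoundedContinuousFunction E ℝ) :
    ∫ y, f y ∂(diracMix x c) = ∑' k, (c k : ℝ) * f (x k) := by
  haveI := diracMix_isFiniteMeasure x c hc
  rw [show diracMix x c = Measure.sum fun k => (c k : ℝ≥0∞) • Measure.dirac (x k) from rfl,
    integral_sum_measure (f.integrable (μ := diracMix x c))]
  refine tsum_congr fun k => ?_
  rw [integral_smul_measure, integral_dirac]
  simp [smul_eq_mul]

/-- The signed measure `∑ₖ aₖ δ_{xₖ}` for `a ∈ ℓ¹`. -/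
noncomputable def sMix (x : ℕ → E) (a : lp (fun _ : ℕ => ℝ) 1) : SignedMeasure E :=
  letI := diracMix_isFiniteMeasure x (fun k => (a k).toNNReal)
    (summable_toNNReal (lp_summable_norm a))
  letI := diracMix_isFiniteMeasure x (fun k => (-(a k)).toNNReal)
    (summable_toNNReal (by simpa using lp_summable_norm a))
  (diracMix x (fun k => (a k).toNNReal)).toSignedMeasure -
    (diracMix x (fun k => (-(a k)).toNNReal)).toSignedMeasure

lemma intSM'_sMix (x : ℕ → E) (a : lp (fun _ : ℕ => ℝ) 1)
    (b : BoundedContinuousFunction E ℝ) :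
    intSM' (sMix x a) ⇑b = ∑' k, a k * b (x k) := by
  have hsp : Summable fun k => (a k).toNNReal := summable_toNNReal (lp_summable_norm a)
  have hsn : Summable fun k => (-(a k)).toNNReal :=
    summable_toNNReal (by simpa using lp_summable_norm a)
  haveI := diracMix_isFiniteMeasure x _ hsp
  haveI := diracMix_isFiniteMeasure x _ hsn
  rw [sMix, intSM'_toSignedMeasure_sub, integral_diracMix x _ hsp b,
    integral_diracMix x _ hsn b]
  have h1 : Summable fun k => ((a k).toNNReal : ℝ) * b (x k) := by
    refine Summable.of_norm_bounded
      ((lp_summable_norm a).mul_right ‖b‖) fun k => ?_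
    rw [norm_mul]
    refine mul_le_mul ?_ (b.norm_coe_le_norm (x k)) (norm_nonneg _) (norm_nonneg _)
    rw [Real.norm_eq_abs, Real.coe_toNNReal', abs_of_nonneg (le_max_right _ _)]
    exact max_le (le_abs_self _) (abs_nonneg _)
  have h2 : Summable fun k => ((-(a k)).toNNReal : ℝ) * b (x k) := by
    refine Summable.of_norm_bounded
      ((lp_summable_norm a).mul_right ‖b‖) fun k => ?_
    rw [norm_mul]
    refine mul_le_mul ?_ (b.norm_coe_le_norm (x k)) (norm_nonneg _) (norm_nonneg _)
    rw [Real.norm_eq_abs, Real.coe_toNNReal', abs_of_nonneg (le_max_right _ _)]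
    refine max_le ?_ (abs_nonneg _)
    rw [Real.norm_eq_abs]
    exact neg_le_abs _
  rw [← h1.tsum_sub h2]
  refine tsum_congr fun k => ?_
  rw [← sub_mul]
  congr 1
  rw [Real.coe_toNNReal', Real.coe_toNNReal']
  rcases le_total 0 (a k) with h | h
  · rw [max_eq_left h, max_eq_right (by linarith)]
    ring
  · rw [max_eq_right h, max_eq_left (by linarith)]
    ring

lemma pairing_summable (x : ℕ → E) (b : BoundedContinuousFunction E ℝ)
    (a : lp (fun _ : ℕ => ℝ) 1) : Summable fun k => a k * b (x k) := by
  refine Summable.of_norm_bounded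
    ((lp_summable_norm a).mul_right ‖b‖) fun k => ?_
  rw [norm_mul]
  exact mul_le_mul_of_nonneg_left (b.norm_coe_le_norm (x k)) (norm_nonneg _)

/-- Pairing of `ℓ¹` with a bounded continuous function along a sequence of points. -/
noncomputable def pairing (x : ℕ → E) (b : BoundedContinuousFunction E ℝ) :
    lp (fun _ : ℕ => ℝ) 1 →L[ℝ] ℝ :=
  LinearMap.mkContinuous
    { toFun := fun a => ∑' k, a k * b (x k)
      map_add' := fun a a' => by
        rw [← (pairing_summable x b a).tsum_add (pairing_summable x b a')]
        refine tsum_congr fun k => ?_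
        rw [lp.coeFn_add, Pi.add_apply, add_mul]
      map_smul' := fun c a => by
        simp only [RingHom.id_apply, smul_eq_mul]
        rw [← tsum_mul_left]
        refine tsum_congr fun k => ?_
        rw [lp.coeFn_smul, Pi.smul_apply, smul_eq_mul, mul_assoc] }
    ‖b‖ (fun a => by
      simp only [LinearMap.coe_mk, AddHom.coe_mk]
      have hnorm : Summable fun k => ‖a k * b (x k)‖ := by
        refine Summable.of_nonneg_of_le (fun k => norm_nonneg _) (fun k => ?_)
          ((lp_summable_norm a).mul_right ‖b‖)
        rw [norm_mul]
        exact mul_le_mul_of_nonneg_left (b.norm_coe_le_norm (x k)) (norm_nonneg _)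
      calc ‖∑' k, a k * b (x k)‖ ≤ ∑' k, ‖a k * b (x k)‖ :=
            norm_tsum_le_tsum_norm hnorm
        _ ≤ ∑' k, ‖a k‖ * ‖b‖ := by
            refine Summable.tsum_le_tsum (fun k => ?_) hnorm
              ((lp_summable_norm a).mul_right ‖b‖)
            rw [norm_mul]
            exact mul_le_mul_of_nonneg_left (b.norm_coe_le_norm (x k)) (norm_nonneg _)
        _ = ‖b‖ * ‖a‖ := by rw [tsum_mul_right, lp_norm_eq, mul_comm])

lemma pairing_apply (x : ℕ → E) (b : BoundedContinuousFunction E ℝ)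
    (a : lp (fun _ : ℕ => ℝ) 1) : pairing x b a = ∑' k, a k * b (x k) := rfl

/-- Uniform boundedness from boundedness of all the integral functionals. -/
lemma exists_norm_bound (f : ℕ → BoundedContinuousFunction E ℝ)
    (h : ∀ s : SignedMeasure E, ∃ r, ∀ n, |intSM' s ⇑(f n)| < r) :
    ∃ C : ℝ, ∀ n, ‖f n‖ ≤ C := by
  by_contra hcon
  push_neg at hcon
  have hx : ∀ k : ℕ, ∃ n : ℕ, ∃ x : E, (k : ℝ) < |f n x| := by
    intro k
    obtain ⟨n, hn⟩ := hcon k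
    by_contra hno
    push_neg at hno
    have : ‖f n‖ ≤ k :=
      BoundedContinuousFunction.norm_le (Nat.cast_nonneg k) |>.2 fun x => by
        simpa [Real.norm_eq_abs] using hno n x
    linarith
  choose nn xx hnx using hx
  set T : ℕ → lp (fun _ : ℕ => ℝ) 1 →L[ℝ] ℝ := fun k => pairing xx (f (nn k)) with hT
  have hpt : ∀ a, ∃ C, ∀ k, ‖T k a‖ ≤ C := by
    intro a
    obtain ⟨r, hr⟩ := h (sMix xx a)
    refine ⟨r, fun k => ?_⟩
    have := hr (nn k)
    rw [intSM'_sMix] at this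
    rw [hT]
    simpa [pairing_apply, Real.norm_eq_abs] using this.le
  obtain ⟨C', hC'⟩ := banach_steinhaus hpt
  obtain ⟨k, hk⟩ := exists_nat_gt C'
  set e : lp (fun _ : ℕ => ℝ) 1 := lp.single 1 k (1 : ℝ) with he
  have hsingle : ‖e‖ = 1 := by
    have := lp.norm_single (α := ℕ) (E := fun _ : ℕ => ℝ) (p := 1) (by norm_num)
      k (1 : ℝ)
    rw [he, this, norm_one]
  have h2 : T k e = f (nn k) (xx k) := by
    rw [hT, pairing_apply, he]
    rw [tsum_eq_single k (fun j hj => by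
      rw [lp.single_apply_ne 1 k _ hj, zero_mul])]
    rw [lp.single_apply_self, one_mul]
  have h3 : ‖T k e‖ ≤ ‖T k‖ :=
    le_trans ((T k).le_opNorm _) (by rw [hsingle, mul_one])
  have h4 := hnx k
  rw [← h2] at h4
  have h5 : ‖T k e‖ ≤ C' := le_trans h3 (hC' k)
  rw [Real.norm_eq_abs] at h5
  linarith
end UBP

section Main
set_option linter.unusedSectionVars false
variable {E : Type*} [MetricSpace E] [MeasurableSpace E] [BorelSpace E]

lemma isVonNBounded_tauK_iff (S : Set (BoundedContinuousFunction E ℝ)) :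
    @Bornology.IsVonNBounded ℝ (BoundedContinuousFunction E ℝ) _ _ _ (tauK E) S ↔
      ∀ i : tauKIdx E, ∃ r > 0, ∀ x ∈ S, pFam E i x < r := by
  letI := tauK E
  exact (withSeminorms_tauK (E := E)).isVonNBounded_iff_seminorm_bounded

lemma tendsto_tauK_iff (f : ℕ → BoundedContinuousFunction E ℝ)
    (g : BoundedContinuousFunction E ℝ) :
    Tendsto f atTop (@nhds _ (tauK E) g) ↔
      ((∀ K : Set E, K.Nonempty → IsCompact K →
          TendstoUniformlyOn (fun n x => f n x) (fun x => g x) atTop K) ∧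
        ∀ s : SignedMeasure E,
          Tendsto (fun n => intSM' s ⇑(f n)) atTop (𝓝 (intSM' s ⇑g))) := by
  rw [nhds_tauK, tendsto_inf]
  constructor
  · rintro ⟨hA, hB⟩
    refine ⟨fun K hne hcpt => ?_, fun s => ?_⟩
    · rw [tendsto_iInf] at hA
      have h1 := hA K
      rw [tendsto_iInf] at h1
      have h2 := h1 hcpt
      rw [tendsto_iInf] at h2
      have h3 := h2 hne
      rw [tendsto_comap_iff] at h3
      rw [tendstoUniformlyOn_iff_tendstoUniformly_comp_coe]
      exact UniformFun.tendsto_iff_tendstoUniformly.mp h3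
    · rw [tendsto_iInf] at hB
      have := hB s
      rwa [tendsto_comap_iff] at this
  · rintro ⟨hA, hB⟩
    constructor
    · rw [tendsto_iInf]; intro K
      rw [tendsto_iInf]; intro hcpt
      rw [tendsto_iInf]; intro hne
      rw [tendsto_comap_iff]
      exact UniformFun.tendsto_iff_tendstoUniformly.mpr
        ((tendstoUniformlyOn_iff_tendstoUniformly_comp_coe).mp (hA K hne hcpt))
    · rw [tendsto_iInf]; intro s
      rw [tendsto_comap_iff]
      exact hB s

theorem stmt14' (f : ℕ → BoundedContinuousFunction E ℝ) (g : BoundedContinuousFunction E ℝ) :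
    ((∃ C : ℝ, ∀ n, ‖f n‖ ≤ C) ∧
        ∀ K : Set E, K.Nonempty → IsCompact K →
          TendstoUniformlyOn (fun n x => f n x) (fun x => g x) atTop K) ↔
      (@Bornology.IsVonNBounded ℝ (BoundedContinuousFunction E ℝ) _ _ _ (tauK E)
          (Set.range f) ∧
        Tendsto f atTop (@nhds _ (tauK E) g)) := by
  constructor
  · rintro ⟨⟨C, hC⟩, hU⟩
    have hC0 : (0:ℝ) ≤ C := le_trans (norm_nonneg _) (hC 0)
    constructor
    · rw [isVonNBounded_tauK_iff]
      rintro (K | s)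
      · refine ⟨C + 1, by linarith, ?_⟩
        rintro x ⟨n, rfl⟩
        rw [pFam_inl]
        calc ‖restrLM K.1 (f n)‖ ≤ ‖f n‖ := norm_restrLM_le _ _
          _ ≤ C := hC n
          _ < C + 1 := by linarith
      · set M : ℝ := (s.toJordanDecomposition.posPart Set.univ).toReal +
          (s.toJordanDecomposition.negPart Set.univ).toReal with hM
        have hM0 : 0 ≤ M := by positivity
        refine ⟨M * C + 1, by positivity, ?_⟩
        rintro x ⟨n, rfl⟩
        rw [pFam_inr]
        calc |intSM' s ⇑(f n)| ≤ M * ‖f n‖ := intSM'_bound s (f n)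
          _ ≤ M * C := mul_le_mul_of_nonneg_left (hC n) hM0
          _ < M * C + 1 := by linarith
    · rw [tendsto_tauK_iff]
      refine ⟨hU, fun s => ?_⟩
      have hpt : ∀ x : E, Tendsto (fun n => f n x) atTop (𝓝 (g x)) := fun x =>
        (hU {x} ⟨x, rfl⟩ isCompact_singleton).tendsto_at (Set.mem_singleton x)
      simp only [intSM']
      apply Tendsto.sub <;>
        refine tendsto_integral_of_dominated_convergence (fun _ => C)
          (fun n => (f n).continuous.aestronglyMeasurable)
          (integrable_const C)
          (fun n => Eventually.of_forall fun x =>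
            le_trans ((f n).norm_coe_le_norm x) (hC n))
          (Eventually.of_forall hpt)
  · rintro ⟨hbdd, htd⟩
    rw [isVonNBounded_tauK_iff] at hbdd
    rw [tendsto_tauK_iff] at htd
    refine ⟨?_, htd.1⟩
    apply exists_norm_bound
    intro s
    obtain ⟨r, _, hr⟩ := hbdd (Sum.inr s)
    refine ⟨r, fun n => ?_⟩
    have := hr (f n) (Set.mem_range_self n)
    rwa [pFam_inr] at this
end Main

/-- A sequence in C_b(E) is sup-norm bounded and converges uniformly on
every compact subset of E iff it is (von Neumann) bounded and convergent in τ_K. -/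
theorem stmt14 {E : Type*} [MetricSpace E] [MeasurableSpace E] [BorelSpace E]
    (f : ℕ → BoundedContinuousFunction E ℝ) (g : BoundedContinuousFunction E ℝ) :
    ((∃ C : ℝ, ∀ n, ‖f n‖ ≤ C) ∧
        ∀ K : Set E, K.Nonempty → IsCompact K →
          TendstoUniformlyOn (fun n x => f n x) (fun x => g x) atTop K) ↔
      (@Bornology.IsVonNBounded ℝ (BoundedContinuousFunction E ℝ) _ _ _ (tauK E)
          (Set.range f) ∧
        Tendsto f atTop (@nhds _ (tauK E) g)) := stmt14' f g
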